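/- Let p be an odd prime. Then $\sum_{k=1}^{p-1} \frac{D_k(-9)}{k} \equiv -6\,\frac{2^{p-1}-1}{p} \pmod{p}$, where $1/k$ denotes the inverse of k mod p. -/

import Mathlib

open Finset Nat

/-- The Delannoy polynomial `D_n(x)` at an integer `x`. -/
def delannoyPoly (n : ℕ) (x : ℤ) : ℤ :=
  ∑ k ∈ Finset.range (n + 1), (n.choose k * (n + k).choose k : ℤ) * x ^ k

section Aux

variable {p : ℕ} [hpf : Fact p.Prime]

/-- Sum of inverses of 1..p-1 vanishes. -/
lemma sum_inv_eq_zero (hp : Odd p) :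
    ∑ k ∈ Icc 1 (p - 1), (k : ZMod p)⁻¹ = 0 := by
  have hp2 : 2 ≤ p := hpf.out.two_le
  have h : ∑ k ∈ Icc 1 (p - 1), (k : ZMod p)⁻¹ = ∑ k ∈ Icc 1 (p - 1), (-(k : ZMod p))⁻¹ := by
    refine Finset.sum_nbij' (fun k => p - k) (fun k => p - k) ?_ ?_ ?_ ?_ ?_ <;>
      intro a ha <;> simp only [mem_Icc] at ha ⊢
    · omega
    · omega
    · omega
    · omega
    · have : (((p - a : ℕ) : ZMod p)) = -(a : ZMod p) := by
        push_cast [Nat.cast_sub (by omega : a ≤ p)]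
        simp [ZMod.natCast_self]
      rw [this, neg_neg]
  have h2 : ∑ k ∈ Icc 1 (p - 1), (-(k : ZMod p))⁻¹ = -∑ k ∈ Icc 1 (p - 1), (k : ZMod p)⁻¹ := by
    simp [inv_neg, Finset.sum_neg_distrib]
  have h3 : (2 : ZMod p) * ∑ k ∈ Icc 1 (p - 1), (k : ZMod p)⁻¹ = 0 := by
    rw [two_mul]
    nth_rewrite 1 [h]
    rw [h2]; ring
  have h4 : (2 : ZMod p) ≠ 0 := by
    have : ((2 : ℕ) : ZMod p) ≠ 0 := by
      rw [Ne, ZMod.natCast_eq_zero_iff]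
      intro hdvd
      have h2 : p = 2 := ((Nat.prime_dvd_prime_iff_eq hpf.out Nat.prime_two).mp hdvd)
      rw [h2] at hp
      exact (Nat.not_odd_iff_even.mpr (by decide)) hp
    exact_mod_cast this
  rcases mul_eq_zero.mp h3 with h | h
  · exact absurd h h4
  · exact h

/-- Sum over all of ZMod p of a product of ≤ p-2 linear factors vanishes. -/
lemma sum_prod_linear_eq_zero (s : Finset ℤ) (hs : s.card < p - 1) :
    ∑ z : ZMod p, ∏ i ∈ s, (z + (i : ZMod p)) = 0 := by
  classical
  have step : ∀ z : ZMod p, ∏ i ∈ s, (z + (i : ZMod p)) =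
      ∑ t ∈ s.powerset, z ^ t.card * ∏ i ∈ s \ t, (i : ZMod p) := by
    intro z
    rw [Finset.prod_add]
    exact Finset.sum_congr rfl fun t ht => by rw [Finset.prod_const]
  calc ∑ z : ZMod p, ∏ i ∈ s, (z + (i : ZMod p))
      = ∑ t ∈ s.powerset, (∑ z : ZMod p, z ^ t.card) * ∏ i ∈ s \ t, (i : ZMod p) := by
        simp only [step, Finset.sum_mul]
        exact Finset.sum_comm
    _ = 0 := by
        refine Finset.sum_eq_zero fun t ht => ?_
        have hz : ∑ z : ZMod p, z ^ t.card = 0 := by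
          have hcard : t.card < Fintype.card (ZMod p) - 1 := by
            rw [ZMod.card]
            exact lt_of_le_of_lt (Finset.card_le_card (Finset.mem_powerset.mp ht)) hs
          exact FiniteField.sum_pow_lt_card_sub_one (K := ZMod p) t.card hcard
        rw [hz, zero_mul]

/-- Converting a sum over `range p` of casts to a sum over `ZMod p`. -/
lemma sum_range_cast (F : ZMod p → ZMod p) :
    ∑ k ∈ range p, F (k : ZMod p) = ∑ z : ZMod p, F z := by
  refine Finset.sum_nbij' (fun k => (k : ZMod p)) (fun z => z.val) ?_ ?_ ?_ ?_ ?_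
  · intro a _; exact Finset.mem_univ _
  · intro z _; exact Finset.mem_range.mpr (ZMod.val_lt z)
  · intro a ha; exact ZMod.val_cast_of_lt (Finset.mem_range.mp ha)
  · intro z _; exact ZMod.natCast_zmod_val z
  · intro a _; rfl

lemma choose_p_sub_one (k : ℕ) (hk : k ≤ p - 1) :
    (((p - 1).choose k : ℕ) : ZMod p) = (-1 : ZMod p) ^ k := by
  induction k with
  | zero => simp
  | succ n ih =>
    have hp2 : 2 ≤ p := hpf.out.two_le
    have hn : n ≤ p - 1 := by omega
    have h0 : ((p.choose (n + 1) : ℕ) : ZMod p) = 0 := by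
      rw [ZMod.natCast_eq_zero_iff]
      exact hpf.out.dvd_choose_self (Nat.succ_ne_zero n) (by omega)
    have h := Nat.choose_succ_succ (p - 1) n
    have hps : (p - 1).succ = p := by omega
    rw [hps] at h
    have h2 := congrArg (fun n : ℕ => (n : ZMod p)) h
    push_cast at h2
    rw [h0, ih hn] at h2
    rw [pow_succ]
    linear_combination -h2

lemma desc_prod (j k : ℕ) (hjk : j ≤ k) :
    (∏ i ∈ Icc (1 - (j : ℤ)) (j : ℤ), ((k : ℤ) + i)) = ((k + j).descFactorial (2 * j) : ℤ) := by
  rw [Nat.descFactorial_eq_prod_range, Nat.cast_prod]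
  refine Finset.prod_nbij' (fun t : ℤ => ((j : ℤ) - t).toNat) (fun a : ℕ => (j : ℤ) - a)
    ?_ ?_ ?_ ?_ ?_ <;> intro a ha <;>
    simp only [Finset.mem_Icc, Finset.mem_range] at ha ⊢ <;> omega

lemma choose_desc (j k : ℕ) (hjk : j ≤ k) :
    k.choose j * (k + j).choose j * (j ! * j !) = (k + j).descFactorial (2 * j) := by
  have h1 := Nat.choose_mul_factorial_mul_factorial (Nat.le_add_left j k)
  have h2 := Nat.choose_mul_factorial_mul_factorial hjk
  have h3 := Nat.factorial_mul_descFactorial (show 2 * j ≤ k + j by omega)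
  have e1 : k + j - j = k := by omega
  have e2 : k + j - 2 * j = k - j := by omega
  rw [e1] at h1
  rw [e2] at h3
  apply Nat.eq_of_mul_eq_mul_left (Nat.factorial_pos (k - j))
  calc (k - j)! * (k.choose j * (k + j).choose j * (j ! * j !))
      = (k + j).choose j * j ! * (k.choose j * j ! * (k - j)!) := by ring
    _ = (k + j).choose j * j ! * k ! := by rw [h2]
    _ = (k + j)! := h1
    _ = (k - j)! * (k + j).descFactorial (2 * j) := h3.symm

lemma term_eq (j k : ℕ) (hj1 : 1 ≤ j) (hjp : j ≤ p - 1) (hk1 : 1 ≤ k) (hkp : k ≤ p - 1) :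
    ((k.choose j * (k + j).choose j : ℕ) : ZMod p) * (k : ZMod p)⁻¹ =
      (((j ! * j ! : ℕ) : ZMod p))⁻¹ *
        ∏ i ∈ (Icc (1 - (j : ℤ)) (j : ℤ)).erase 0, ((k : ZMod p) + (i : ZMod p)) := by
  by_cases hcase : k < j
  · have h0 : k.choose j = 0 := Nat.choose_eq_zero_of_lt hcase
    have hmem : (-(k : ℤ)) ∈ (Icc (1 - (j : ℤ)) (j : ℤ)).erase 0 := by
      simp only [Finset.mem_erase, Finset.mem_Icc]
      constructor
      · simp only [ne_eq, neg_eq_zero]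
        exact_mod_cast (by omega : k ≠ 0)
      · constructor <;> [skip; skip] <;> push_cast <;> omega
    have hz : ∏ i ∈ (Icc (1 - (j : ℤ)) (j : ℤ)).erase 0, ((k : ZMod p) + (i : ZMod p)) = 0 := by
      refine Finset.prod_eq_zero hmem ?_
      push_cast
      ring
    rw [h0, hz]
    simp
  · push_neg at hcase
    have hk0 : (k : ZMod p) ≠ 0 := by
      rw [Ne, ZMod.natCast_eq_zero_iff]
      intro hdvd
      have := Nat.le_of_dvd (by omega) hdvd
      omega
    have hf0 : ((j ! * j ! : ℕ) : ZMod p) ≠ 0 := by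
      rw [Ne, ZMod.natCast_eq_zero_iff]
      intro hdvd
      rcases (Nat.Prime.dvd_mul hpf.out).mp hdvd with h | h <;>
        · have := (Nat.Prime.dvd_factorial hpf.out).mp h
          omega
    have h4 := desc_prod j k hcase
    have h6 : (((k + j).descFactorial (2 * j) : ℕ) : ZMod p) =
        (k : ZMod p) * ∏ i ∈ (Icc (1 - (j : ℤ)) (j : ℤ)).erase 0, ((k : ZMod p) + (i : ZMod p)) := by
      have h5 := congrArg (fun z : ℤ => ((z : ZMod p))) h4.symm
      push_cast at h5
      rw [h5]
      rw [← Finset.mul_prod_erase _ _ (show (0 : ℤ) ∈ Icc (1 - (j : ℤ)) (j : ℤ) by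
        simp only [Finset.mem_Icc]; omega)]
      push_cast
      ring
    have key : ((k.choose j * (k + j).choose j : ℕ) : ZMod p) * ((j ! * j ! : ℕ) : ZMod p) =
        (k : ZMod p) * ∏ i ∈ (Icc (1 - (j : ℤ)) (j : ℤ)).erase 0, ((k : ZMod p) + (i : ZMod p)) := by
      rw [← h6]
      rw [← Nat.cast_mul]
      rw [choose_desc j k hcase]
    have hkinv := mul_inv_cancel₀ hk0
    have hFinv := inv_mul_cancel₀ hf0
    calc ((k.choose j * (k + j).choose j : ℕ) : ZMod p) * (k : ZMod p)⁻¹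
        = (((j ! * j ! : ℕ) : ZMod p)⁻¹ * ((j ! * j ! : ℕ) : ZMod p)) *
            (((k.choose j * (k + j).choose j : ℕ) : ZMod p) * (k : ZMod p)⁻¹) := by
          rw [hFinv, one_mul]
      _ = ((j ! * j ! : ℕ) : ZMod p)⁻¹ *
            (((k.choose j * (k + j).choose j : ℕ) : ZMod p) * ((j ! * j ! : ℕ) : ZMod p)) *
            (k : ZMod p)⁻¹ := by ring
      _ = ((j ! * j ! : ℕ) : ZMod p)⁻¹ *
            ((k : ZMod p) *
              ∏ i ∈ (Icc (1 - (j : ℤ)) (j : ℤ)).erase 0, ((k : ZMod p) + (i : ZMod p))) *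
            (k : ZMod p)⁻¹ := by rw [key]
      _ = ((j ! * j ! : ℕ) : ZMod p)⁻¹ *
            (∏ i ∈ (Icc (1 - (j : ℤ)) (j : ℤ)).erase 0, ((k : ZMod p) + (i : ZMod p))) *
            ((k : ZMod p) * (k : ZMod p)⁻¹) := by ring
      _ = _ := by rw [hkinv, mul_one]

lemma prod_erase_zero (j : ℕ) (hj : 1 ≤ j) :
    (∏ i ∈ (Icc (1 - (j : ℤ)) (j : ℤ)).erase 0, i) =
      (-1 : ℤ) ^ (j - 1) * (((j - 1)! : ℕ) : ℤ) ^ 2 * j := by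
  obtain ⟨m, rfl⟩ : ∃ m, j = m + 1 := ⟨j - 1, by omega⟩
  simp only [Nat.add_sub_cancel]
  induction m with
  | zero =>
    decide
  | succ n ih =>
    have hset : Icc (1 - ((n + 1 + 1 : ℕ) : ℤ)) ((n + 1 + 1 : ℕ) : ℤ) =
        insert (-(n + 1 : ℤ)) (insert ((n : ℤ) + 2) (Icc (1 - ((n + 1 : ℕ) : ℤ)) ((n + 1 : ℕ) : ℤ))) := by
      ext t
      simp only [Finset.mem_Icc, Finset.mem_insert]
      push_cast
      omega
    have hne1 : (-(n + 1 : ℤ)) ≠ 0 := by omega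
    have hne2 : ((n : ℤ) + 2) ≠ 0 := by omega
    have hmem1 : (-(n + 1 : ℤ)) ∉ insert ((n : ℤ) + 2) ((Icc (1 - ((n + 1 : ℕ) : ℤ)) ((n + 1 : ℕ) : ℤ)).erase 0) := by
      simp only [Finset.mem_insert, Finset.mem_erase, Finset.mem_Icc]
      push_cast
      omega
    have hmem2 : ((n : ℤ) + 2) ∉ (Icc (1 - ((n + 1 : ℕ) : ℤ)) ((n + 1 : ℕ) : ℤ)).erase 0 := by
      simp only [Finset.mem_erase, Finset.mem_Icc]
      push_cast
      omega
    rw [hset, Finset.erase_insert_of_ne hne1, Finset.erase_insert_of_ne hne2,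
      Finset.prod_insert hmem1, Finset.prod_insert hmem2, ih (by omega)]
    push_cast [Nat.factorial_succ, pow_succ]
    ring

lemma inner_small (j : ℕ) (hj1 : 1 ≤ j) (hj2 : j ≤ (p - 1) / 2) (hp : Odd p) :
    ∑ k ∈ Icc 1 (p - 1), ((k.choose j * (k + j).choose j : ℕ) : ZMod p) * (k : ZMod p)⁻¹ =
      (-1 : ZMod p) ^ j * (j : ZMod p)⁻¹ := by
  have hp2 : 2 ≤ p := hpf.out.two_le
  obtain ⟨t, ht⟩ := hp
  have hjp : j ≤ p - 1 := by omega
  have hterm : ∀ k ∈ Icc 1 (p - 1),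
      ((k.choose j * (k + j).choose j : ℕ) : ZMod p) * (k : ZMod p)⁻¹ =
      ((j ! * j ! : ℕ) : ZMod p)⁻¹ *
        ∏ i ∈ (Icc (1 - (j : ℤ)) (j : ℤ)).erase 0, ((k : ZMod p) + (i : ZMod p)) := by
    intro k hk
    simp only [Finset.mem_Icc] at hk
    exact term_eq j k hj1 hjp hk.1 hk.2
  rw [Finset.sum_congr rfl hterm, ← Finset.mul_sum]
  have hins : insert 0 (Icc 1 (p - 1)) = range p := by
    ext u
    simp only [Finset.mem_insert, Finset.mem_Icc, Finset.mem_range]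
    omega
  have hcardE : ((Icc (1 - (j : ℤ)) (j : ℤ)).erase 0).card = 2 * j - 1 := by
    rw [Finset.card_erase_of_mem (by simp only [Finset.mem_Icc]; omega), Int.card_Icc]
    omega
  have hall : ∑ k ∈ range p,
      ∏ i ∈ (Icc (1 - (j : ℤ)) (j : ℤ)).erase 0, (((k : ℕ) : ZMod p) + (i : ZMod p)) = 0 := by
    rw [sum_range_cast (fun z => ∏ i ∈ (Icc (1 - (j : ℤ)) (j : ℤ)).erase 0, (z + (i : ZMod p)))]
    apply sum_prod_linear_eq_zero
    rw [hcardE]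
    omega
  have hsplit : ∑ k ∈ Icc 1 (p - 1),
      ∏ i ∈ (Icc (1 - (j : ℤ)) (j : ℤ)).erase 0, ((k : ZMod p) + (i : ZMod p)) =
      - ∏ i ∈ (Icc (1 - (j : ℤ)) (j : ℤ)).erase 0, (((0 : ℕ) : ZMod p) + (i : ZMod p)) := by
    rw [← hins, Finset.sum_insert (by simp)] at hall
    linear_combination hall
  rw [hsplit]
  have hQ0 : ∏ i ∈ (Icc (1 - (j : ℤ)) (j : ℤ)).erase 0, (((0 : ℕ) : ZMod p) + (i : ZMod p)) =
      (-1 : ZMod p) ^ (j - 1) * (((j - 1)! : ℕ) : ZMod p) ^ 2 * (j : ZMod p) := by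
    have h5 := congrArg (fun z : ℤ => ((z : ZMod p))) (prod_erase_zero j hj1)
    push_cast at h5 ⊢
    simpa using h5
  rw [hQ0]
  have ha : (((j - 1)! : ℕ) : ZMod p) ≠ 0 := by
    rw [Ne, ZMod.natCast_eq_zero_iff]
    intro hdvd
    have := (Nat.Prime.dvd_factorial hpf.out).mp hdvd
    omega
  have hjz : (j : ZMod p) ≠ 0 := by
    rw [Ne, ZMod.natCast_eq_zero_iff]
    intro hdvd
    have := Nat.le_of_dvd (by omega) hdvd
    omega
  have hfa : ((j ! * j ! : ℕ) : ZMod p) =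
      ((j : ZMod p) * (((j - 1)! : ℕ) : ZMod p)) * ((j : ZMod p) * (((j - 1)! : ℕ) : ZMod p)) := by
    have : j * (j - 1)! = j ! := Nat.mul_factorial_pred (by omega)
    rw [← this]
    push_cast
    ring
  have hsgn : (-1 : ZMod p) ^ j = (-1 : ZMod p) ^ (j - 1) * (-1) := by
    rw [← pow_succ]
    congr 1
    omega
  rw [hfa, hsgn]
  field_simp

lemma inner_large (j : ℕ) (hj1 : (p - 1) / 2 < j) (hjp : j ≤ p - 1) (hp : Odd p) (k : ℕ)
    (hk1 : 1 ≤ k) (hkp : k ≤ p - 1) :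
    ((k.choose j * (k + j).choose j : ℕ) : ZMod p) = 0 := by
  by_cases hcase : k < j
  · simp [Nat.choose_eq_zero_of_lt hcase]
  push_neg at hcase
  have hp2 : 2 ≤ p := hpf.out.two_le
  obtain ⟨t, ht⟩ := hp
  have hz : (((k + j).descFactorial (2 * j) : ℕ) : ZMod p) = 0 := by
    have h5 := congrArg (fun z : ℤ => ((z : ZMod p))) (desc_prod j k hcase).symm
    push_cast at h5
    rw [h5]
    refine Finset.prod_eq_zero (i := ((p : ℤ) - (k : ℤ))) ?_ ?_
    · simp only [Finset.mem_Icc]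
      omega
    · push_cast [ZMod.natCast_self]
      ring
  have key : ((k.choose j * (k + j).choose j : ℕ) : ZMod p) * ((j ! * j ! : ℕ) : ZMod p) = 0 := by
    rw [← Nat.cast_mul, choose_desc j k hcase, hz]
  rcases mul_eq_zero.mp key with h | h
  · exact h
  · exfalso
    rw [ZMod.natCast_eq_zero_iff] at h
    rcases (Nat.Prime.dvd_mul hpf.out).mp h with h2 | h2 <;>
      · have := (Nat.Prime.dvd_factorial hpf.out).mp h2
        omega

lemma final_sum (hp : Odd p) :
    ∑ j ∈ Icc 1 ((p - 1) / 2), (9 : ZMod p) ^ j * (j : ZMod p)⁻¹ =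
      -6 * (((2 ^ (p - 1) - 1) / p : ℤ) : ZMod p) := by
  have hp2 : 2 ≤ p := hpf.out.two_le
  obtain ⟨t0, ht0⟩ := id hp
  have hp3 : 3 ≤ p := by omega
  set m := (p - 1) / 2 with hm
  have h2z : (2 : ZMod p) ≠ 0 := by
    have : ((2 : ℕ) : ZMod p) ≠ 0 := by
      rw [Ne, ZMod.natCast_eq_zero_iff]
      intro hdvd
      have := Nat.le_of_dvd (by omega) hdvd
      omega
    exact_mod_cast this
  have hferm : (2 : ZMod p) ^ (p - 1) = 1 := ZMod.pow_card_sub_one_eq_one h2z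
  have hdvd : (p : ℤ) ∣ 2 ^ (p - 1) - 1 := by
    have hz : ((2 ^ (p - 1) - 1 : ℤ) : ZMod p) = 0 := by
      push_cast
      rw [hferm]
      ring
    exact (ZMod.intCast_zmod_eq_zero_iff_dvd _ _).mp hz
  set q : ℤ := (2 ^ (p - 1) - 1) / p with hqdef
  have hq : (p : ℤ) * q = 2 ^ (p - 1) - 1 := Int.mul_ediv_cancel' hdvd
  have hpz : ((p : ℤ)) ≠ 0 := by exact_mod_cast (by omega : p ≠ 0)
  have hins : insert 0 (Icc 1 (p - 1)) = range p := by
    ext u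
    simp only [Finset.mem_insert, Finset.mem_Icc, Finset.mem_range]
    omega
  have hbinom : ∀ x : ℤ, ∑ k ∈ Icc 1 (p - 1), (p.choose k : ℤ) * x ^ k
      = (x + 1) ^ p - 1 - x ^ p := by
    intro x
    have h := add_pow x 1 p
    simp only [one_pow, mul_one] at h
    rw [Finset.sum_range_succ, Nat.choose_self] at h
    have h0 : ∑ k ∈ range p, x ^ k * (p.choose k : ℤ) =
        1 + ∑ k ∈ Icc 1 (p - 1), x ^ k * (p.choose k : ℤ) := by
      rw [← hins, Finset.sum_insert (by simp)]
      simp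
    rw [h0] at h
    have hcomm : ∑ k ∈ Icc 1 (p - 1), (p.choose k : ℤ) * x ^ k =
        ∑ k ∈ Icc 1 (p - 1), x ^ k * (p.choose k : ℤ) :=
      Finset.sum_congr rfl fun k _ => mul_comm _ _
    rw [hcomm]
    push_cast at h
    linarith [h]
  set c : ℕ → ℤ := fun k => (p.choose k : ℤ) / p with hcdef
  have hc : ∀ k ∈ Icc 1 (p - 1), (p : ℤ) * c k = (p.choose k : ℤ) := by
    intro k hk
    simp only [Finset.mem_Icc] at hk
    refine Int.mul_ediv_cancel' ?_
    exact_mod_cast Int.natCast_dvd_natCast.mpr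
      (hpf.out.dvd_choose_self (by omega) (by omega))
  have hkey : (p : ℤ) * ∑ k ∈ Icc 1 (p - 1), c k * (3 ^ k + (-3) ^ k)
      = (p : ℤ) * (2 * (2 ^ p + 1) * q) := by
    rw [Finset.mul_sum]
    have hstep : ∀ k ∈ Icc 1 (p - 1),
        (p : ℤ) * (c k * (3 ^ k + (-3) ^ k)) = (p.choose k : ℤ) * (3 ^ k + (-3) ^ k) := by
      intro k hk
      rw [← mul_assoc, hc k hk]
    rw [Finset.sum_congr rfl hstep]
    have hsplit : ∑ k ∈ Icc 1 (p - 1), (p.choose k : ℤ) * (3 ^ k + (-3) ^ k) =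
        (∑ k ∈ Icc 1 (p - 1), (p.choose k : ℤ) * 3 ^ k) +
          ∑ k ∈ Icc 1 (p - 1), (p.choose k : ℤ) * (-3) ^ k := by
      rw [← Finset.sum_add_distrib]
      exact Finset.sum_congr rfl fun k _ => by ring
    rw [hsplit, hbinom 3, hbinom (-3)]
    have e1 : ((-3 : ℤ) + 1) = -2 := by norm_num
    rw [e1]
    rw [hp.neg_pow, hp.neg_pow]
    have h4 : ((3 : ℤ) + 1) ^ p = (2 ^ p) ^ 2 := by
      rw [show ((3 : ℤ) + 1) = 2 ^ 2 by norm_num, ← pow_mul, ← pow_mul']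
    have h2p : (2 : ℤ) ^ p = 2 * 2 ^ (p - 1) := by
      conv_lhs => rw [show p = (p - 1) + 1 by omega]
      rw [pow_succ]
      ring
    rw [h4, h2p]
    linear_combination (-(2 * (2 * (2 : ℤ) ^ (p - 1) + 1))) * hq
  have hsum : ∑ k ∈ Icc 1 (p - 1), c k * (3 ^ k + (-3) ^ k) = 2 * (2 ^ p + 1) * q :=
    mul_left_cancel₀ hpz hkey
  have hcast := congrArg (fun z : ℤ => (z : ZMod p)) hsum
  push_cast at hcast
  have hck : ∀ k ∈ Icc 1 (p - 1), ((c k : ℤ) : ZMod p) = (-1 : ZMod p) ^ (k - 1) * (k : ZMod p)⁻¹ := by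
    intro k hk
    have hkmem := hk
    simp only [Finset.mem_Icc] at hk
    have hk0 : (k : ZMod p) ≠ 0 := by
      rw [Ne, ZMod.natCast_eq_zero_iff]
      intro hdvd
      have := Nat.le_of_dvd (by omega) hdvd
      omega
    have h := Nat.add_one_mul_choose_eq (p - 1) (k - 1)
    have e3 : p - 1 + 1 = p := by omega
    have e4 : k - 1 + 1 = k := by omega
    rw [e3, e4] at h
    have hZ0 := congrArg (fun n : ℕ => (n : ℤ)) h
    push_cast at hZ0
    have hZ : (p : ℤ) * ((p - 1).choose (k - 1) : ℤ) = (p : ℤ) * (c k * k) := by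
      linear_combination hZ0 - (k : ℤ) * hc k hkmem
    have hkc := mul_left_cancel₀ hpz hZ
    have hzc := congrArg (fun z : ℤ => (z : ZMod p)) hkc
    push_cast at hzc
    rw [choose_p_sub_one (k - 1) (by omega)] at hzc
    calc ((c k : ℤ) : ZMod p) = ((c k : ℤ) : ZMod p) * ((k : ZMod p) * (k : ZMod p)⁻¹) := by
          rw [mul_inv_cancel₀ hk0, mul_one]
      _ = (-1 : ZMod p) ^ (k - 1) * (k : ZMod p)⁻¹ := by rw [hzc]; ring
  have hT : ∑ k ∈ Icc 1 (p - 1), ((c k : ℤ) : ZMod p) * ((3 : ZMod p) ^ k + (-3 : ZMod p) ^ k) =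
      - ∑ k ∈ Icc 1 (p - 1), ((3 : ZMod p) ^ k + (-3 : ZMod p) ^ k) * (k : ZMod p)⁻¹ := by
    rw [← Finset.sum_neg_distrib]
    refine Finset.sum_congr rfl fun k hk => ?_
    rw [hck k hk]
    simp only [Finset.mem_Icc] at hk
    have hsgn : (-1 : ZMod p) ^ (k - 1) = -(-1 : ZMod p) ^ k := by
      have hh : (-1 : ZMod p) ^ k = (-1) ^ (k - 1) * (-1) := by
        rw [← pow_succ]
        congr 1
        omega
      rw [hh]
      ring
    rw [hsgn]
    have h3 : (-1 : ZMod p) ^ k * (3 : ZMod p) ^ k = (-3) ^ k := by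
      rw [← mul_pow]
      norm_num
    have h3' : (-1 : ZMod p) ^ k * (-3 : ZMod p) ^ k = 3 ^ k := by
      rw [← mul_pow]
      norm_num
    linear_combination (-(k : ZMod p)⁻¹) * h3 + (-(k : ZMod p)⁻¹) * h3'
  have h2pz : (2 : ZMod p) ^ p = 2 := by
    have he : (2 : ZMod p) ^ p = (2 : ZMod p) ^ ((p - 1) + 1) := by
      congr 1
      omega
    rw [he, pow_succ, hferm, one_mul]
  have hTval : ∑ k ∈ Icc 1 (p - 1), ((3 : ZMod p) ^ k + (-3 : ZMod p) ^ k) * (k : ZMod p)⁻¹ =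
      -6 * ((q : ℤ) : ZMod p) := by
    linear_combination hT - hcast - 2 * ((q : ℤ) : ZMod p) * h2pz
  rw [← hTval]
  have hsub : (Icc 1 m).image (fun j => 2 * j) ⊆ Icc 1 (p - 1) := by
    intro x hx
    simp only [Finset.mem_image, Finset.mem_Icc] at hx ⊢
    obtain ⟨j, hj, rfl⟩ := hx
    omega
  have hvan : ∀ x ∈ Icc 1 (p - 1), x ∉ (Icc 1 m).image (fun j => 2 * j) →
      ((3 : ZMod p) ^ x + (-3 : ZMod p) ^ x) * (x : ZMod p)⁻¹ = 0 := by
    intro x hx hnx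
    simp only [Finset.mem_Icc] at hx
    have hodd : Odd x := by
      rcases Nat.even_or_odd x with he | ho
      · exfalso
        obtain ⟨u, hu⟩ := he
        exact hnx (by
          simp only [Finset.mem_image, Finset.mem_Icc]
          exact ⟨u, ⟨by omega, by omega⟩, by omega⟩)
      · exact ho
    rw [hodd.neg_pow]
    ring
  rw [← Finset.sum_subset hsub hvan]
  rw [Finset.sum_image (by intro a _ b _ hab; simp only at hab; omega)]
  refine Finset.sum_congr rfl fun j hj => ?_
  simp only [Finset.mem_Icc] at hj
  have hodd2 : (-3 : ZMod p) ^ (2 * j) = (3 : ZMod p) ^ (2 * j) := by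
    rw [pow_mul, pow_mul]
    norm_num
  have h9 : (3 : ZMod p) ^ (2 * j) = 9 ^ j := by
    rw [pow_mul]
    norm_num
  have h2j : ((2 * j : ℕ) : ZMod p)⁻¹ = ((2 : ZMod p) * (j : ZMod p))⁻¹ := by
    push_cast
    ring_nf
  rw [hodd2, h9, h2j, mul_inv]
  have h2inv : (2 : ZMod p) * (2 : ZMod p)⁻¹ = 1 := mul_inv_cancel₀ h2z
  linear_combination (-((9 : ZMod p) ^ j * (j : ZMod p)⁻¹)) * h2inv

end Aux

theorem sun_1_6 (p : ℕ) [Fact p.Prime] (hp : Odd p) :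
    ∑ k ∈ Finset.Icc 1 (p - 1), (delannoyPoly k (-9) : ZMod p) * (k : ZMod p)⁻¹ =
      -6 * (((2 ^ (p - 1) - 1) / p : ℤ) : ZMod p) := by
  have hp2 : 2 ≤ p := (Fact.out : p.Prime).two_le
  obtain ⟨t0, ht0⟩ := id hp
  have hp3 : 3 ≤ p := by omega
  have h1 : ∀ k ∈ Finset.Icc 1 (p - 1), (delannoyPoly k (-9) : ZMod p) * (k : ZMod p)⁻¹ =
      ∑ j ∈ range p,
        ((k.choose j * (k + j).choose j : ℕ) : ZMod p) * (-9 : ZMod p) ^ j * (k : ZMod p)⁻¹ := by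
    intro k hk
    simp only [Finset.mem_Icc] at hk
    have hcast : ((delannoyPoly k (-9) : ℤ) : ZMod p) =
        ∑ j ∈ range (k + 1),
          ((k.choose j * (k + j).choose j : ℕ) : ZMod p) * (-9 : ZMod p) ^ j := by
      unfold delannoyPoly
      push_cast
      rfl
    have hext : ∑ j ∈ range (k + 1),
          ((k.choose j * (k + j).choose j : ℕ) : ZMod p) * (-9 : ZMod p) ^ j
        = ∑ j ∈ range p,
          ((k.choose j * (k + j).choose j : ℕ) : ZMod p) * (-9 : ZMod p) ^ j := by
      refine Finset.sum_subset (by intro x hx; simp only [Finset.mem_range] at *; omega) ?_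
      intro x _ hnx
      simp only [Finset.mem_range] at hnx
      have hz : k.choose x = 0 := Nat.choose_eq_zero_of_lt (by omega)
      rw [hz]
      simp
    rw [hcast, hext, Finset.sum_mul]
  rw [Finset.sum_congr rfl h1, Finset.sum_comm]
  have h2 : ∀ j ∈ range p,
      ∑ k ∈ Finset.Icc 1 (p - 1),
        ((k.choose j * (k + j).choose j : ℕ) : ZMod p) * (-9 : ZMod p) ^ j * (k : ZMod p)⁻¹
      = (-9 : ZMod p) ^ j * ∑ k ∈ Finset.Icc 1 (p - 1),
          ((k.choose j * (k + j).choose j : ℕ) : ZMod p) * (k : ZMod p)⁻¹ := by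
    intro j _
    rw [Finset.mul_sum]
    exact Finset.sum_congr rfl fun k _ => by ring
  rw [Finset.sum_congr rfl h2]
  have hins : insert 0 (Finset.Icc 1 (p - 1)) = range p := by
    ext u
    simp only [Finset.mem_insert, Finset.mem_Icc, Finset.mem_range]
    omega
  rw [← hins, Finset.sum_insert (by simp)]
  have hz0 : (-9 : ZMod p) ^ 0 * ∑ k ∈ Finset.Icc 1 (p - 1),
      ((k.choose 0 * (k + 0).choose 0 : ℕ) : ZMod p) * (k : ZMod p)⁻¹ = 0 := by
    simp only [Nat.choose_zero_right, one_mul, Nat.mul_one, Nat.cast_one, pow_zero]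
    simpa using sum_inv_eq_zero hp
  rw [hz0, zero_add]
  have hsub : Finset.Icc 1 ((p - 1) / 2) ⊆ Finset.Icc 1 (p - 1) := by
    intro x hx
    simp only [Finset.mem_Icc] at *
    omega
  have hvan : ∀ j ∈ Finset.Icc 1 (p - 1), j ∉ Finset.Icc 1 ((p - 1) / 2) →
      (-9 : ZMod p) ^ j * ∑ k ∈ Finset.Icc 1 (p - 1),
        ((k.choose j * (k + j).choose j : ℕ) : ZMod p) * (k : ZMod p)⁻¹ = 0 := by
    intro j hj hnj
    simp only [Finset.mem_Icc] at hj hnj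
    have hinner : ∑ k ∈ Finset.Icc 1 (p - 1),
        ((k.choose j * (k + j).choose j : ℕ) : ZMod p) * (k : ZMod p)⁻¹ = 0 := by
      refine Finset.sum_eq_zero fun k hk => ?_
      simp only [Finset.mem_Icc] at hk
      rw [inner_large j (by omega) (by omega) hp k hk.1 hk.2]
      ring
    rw [hinner, mul_zero]
  rw [← Finset.sum_subset hsub hvan]
  have h3 : ∀ j ∈ Finset.Icc 1 ((p - 1) / 2),
      (-9 : ZMod p) ^ j * ∑ k ∈ Finset.Icc 1 (p - 1),
        ((k.choose j * (k + j).choose j : ℕ) : ZMod p) * (k : ZMod p)⁻¹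
      = (9 : ZMod p) ^ j * (j : ZMod p)⁻¹ := by
    intro j hj
    simp only [Finset.mem_Icc] at hj
    rw [inner_small j hj.1 hj.2 hp]
    have : (-9 : ZMod p) ^ j * (-1 : ZMod p) ^ j = (9 : ZMod p) ^ j := by
      rw [← mul_pow]
      norm_num
    calc (-9 : ZMod p) ^ j * ((-1 : ZMod p) ^ j * (j : ZMod p)⁻¹)
        = ((-9 : ZMod p) ^ j * (-1 : ZMod p) ^ j) * (j : ZMod p)⁻¹ := by ring
      _ = (9 : ZMod p) ^ j * (j : ZMod p)⁻¹ := by rw [this]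
  rw [Finset.sum_congr rfl h3]
  exact final_sum hp
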